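/- Let F ∈ C²[0,∞) with F'(x) ≤ 0 and F''(x) ≥ 0 for all x ≥ 0. Fix x_i > 0 and suppose 0 < F(x_i) < 1/x_i. Set F_i = F(x_i), x₁ = (1 + √(1 - x_i F_i))/F_i. If |F'(x_i)| < F_i²/(1 + √(1 - x_i F_i))², then x₁ > x_i and F(x₁) > 1/x₁. -/

import Mathlib

theorem stmt_13 (F : ℝ → ℝ) (hF : ContDiff ℝ 2 F)
    (hF' : ∀ x ≥ (0:ℝ), deriv F x ≤ 0)
    (hF'' : ∀ x ≥ (0:ℝ), deriv (deriv F) x ≥ 0)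
    (xi : ℝ) (hxi : 0 < xi) (hFi : 0 < F xi) (hFi' : F xi < 1/xi)
    (x₁ : ℝ) (hx₁ : x₁ = (1 + Real.sqrt (1 - xi * F xi)) / F xi)
    (hslope : |deriv F xi| < (F xi)^2 / (1 + Real.sqrt (1 - xi * F xi))^2) :
    x₁ > xi ∧ F x₁ > 1/x₁ := by
  set Fi := F xi with hFidef
  set s := Real.sqrt (1 - xi * Fi) with hsdef
  have h1 : 0 < 1 - xi * Fi := by
    have h := mul_lt_mul_of_pos_left hFi' hxi
    rw [mul_one_div, div_self hxi.ne'] at h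
    linarith
  have hs : 0 < s := Real.sqrt_pos.mpr h1
  have hs2 : s ^ 2 = 1 - xi * Fi := Real.sq_sqrt h1.le
  have hx₁gt : x₁ > xi := by
    rw [hx₁, gt_iff_lt, lt_div_iff₀ hFi]
    nlinarith
  refine ⟨hx₁gt, ?_⟩
  have hdF : Differentiable ℝ F := hF.differentiable (by norm_num)
  obtain ⟨c, hc, hceq⟩ := exists_deriv_eq_slope F hx₁gt hdF.continuous.continuousOn
    hdF.differentiableOn
  have hdF1 : Differentiable ℝ (deriv F) := by
    have h2 : ContDiff ℝ ((1 : ℕ∞) + 1) F := by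
      convert hF using 2
      norm_num
    exact ((contDiff_succ_iff_deriv.mp h2).2.2).differentiable (by norm_num)
  have hmono : MonotoneOn (deriv F) (Set.Ici 0) := by
    apply monotoneOn_of_deriv_nonneg (convex_Ici 0) hdF1.continuous.continuousOn
      (fun x _ => (hdF1 x).differentiableWithinAt)
    intro x hx
    rw [interior_Ici] at hx
    exact hF'' x (le_of_lt hx)
  have hcge : deriv F xi ≤ deriv F c :=
    hmono (Set.mem_Ici.mpr hxi.le) (Set.mem_Ici.mpr (hxi.trans hc.1).le) hc.1.le
  have hA : F x₁ - Fi = deriv F c * (x₁ - xi) := by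
    rw [hceq, div_mul_cancel₀ _ (sub_ne_zero.mpr hx₁gt.ne')]
  have hds : deriv F xi ≤ 0 := hF' xi hxi.le
  rw [abs_of_nonpos hds] at hslope
  have hC : deriv F xi > -(Fi ^ 2 / (1 + s) ^ 2) := by linarith
  have hx₁pos : 0 < x₁ := lt_trans hxi hx₁gt
  have hdiff : x₁ - xi = s * (1 + s) / Fi := by
    rw [hx₁]
    field_simp
    nlinarith
  have hinv : 1 / x₁ = Fi / (1 + s) := by
    rw [hx₁]
    rw [one_div_div]
  rw [hinv]
  have h1s : 0 < 1 + s := by linarith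
  have hstep : deriv F xi * (x₁ - xi) ≤ deriv F c * (x₁ - xi) :=
    mul_le_mul_of_nonneg_right hcge (by linarith)
  have hstep2 : -(Fi ^ 2 / (1 + s) ^ 2) * (x₁ - xi) < deriv F xi * (x₁ - xi) := by
    apply mul_lt_mul_of_pos_right hC
    linarith
  have hkey : -(Fi ^ 2 / (1 + s) ^ 2) * (x₁ - xi) = Fi / (1 + s) - Fi := by
    rw [hdiff]
    field_simp
    ring
  nlinarith
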